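/- Let d ≥ 2 be an integer, b > 1 a real number, t ∈ (0,1), and λ = e^{iπt}. Let γ(z) = (z+b)/(bz+1) and f_λ(z) = λ·γ(z)^d. Then for z ∈ S¹: f_λ(z) ∈ Arc(1, λ) if and only if there exists m ∈ {0, 1, …, d−1} such that γ(z) ∈ Arc(e^{iπ(2m−t)/d}, e^{iπ·2m/d}). In other words, the preimage f_λ^{−1}(Arc(1,λ)) ∩ S¹ is the disjoint union over m = 0,…,d−1 of the arcs γ^{−1}(Arc(e^{iπ(2m−t)/d}, e^{iπ·2m/d})). -/

import Mathlib

open Complex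

/-- The Möbius map `γ(z) = (z+b)/(bz+1)`. -/
noncomputable def gammaM (b : ℝ) (z : ℂ) : ℂ :=
  (z + (b : ℂ)) / ((b : ℂ) * z + 1)

/-- The Ising recursion map `f_λ(z) = λ·γ(z)^d`. -/
noncomputable def fIsing (d : ℕ) (b : ℝ) (lam z : ℂ) : ℂ :=
  lam * (gammaM b z) ^ d

/-- The angle in `[0, 2π)` of the counterclockwise arc from `α` to `β` on the unit circle. -/
noncomputable def arcAngle (α β : ℂ) : ℝ :=
  if (β / α).arg < 0 then (β / α).arg + 2 * Real.pi else (β / α).arg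

/-- The open counterclockwise circular arc from `α` to `β`. -/
def openArc (α β : ℂ) : Set ℂ :=
  {z | ∃ t : ℝ, 0 < t ∧ t < arcAngle α β ∧ z = α * Complex.exp (t * Complex.I)}

lemma expI_eq_iff (x y : ℝ) :
    Complex.exp ((x:ℂ) * I) = Complex.exp ((y:ℂ) * I) ↔ ∃ k : ℤ, x = y + 2 * Real.pi * k := by
  rw [Complex.exp_eq_exp_iff_exists_int]
  constructor
  · rintro ⟨n, hn⟩
    refine ⟨n, ?_⟩
    have hn' : (x:ℂ) * I = ((y + 2*Real.pi*n : ℝ) : ℂ) * I := by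
      push_cast; linear_combination hn
    have := mul_right_cancel₀ I_ne_zero hn'
    exact_mod_cast this
  · rintro ⟨k, hk⟩
    exact ⟨k, by push_cast [hk]; ring⟩

lemma argexpI (x : ℝ) (h1 : -Real.pi < x) (h2 : x ≤ Real.pi) :
    (Complex.exp ((x:ℂ) * I)).arg = x := by
  rw [Complex.exp_mul_I]
  exact Complex.arg_cos_add_sin_mul_I ⟨h1, h2⟩

lemma arcAngle_arcs (d : ℕ) (hd : 2 ≤ d) (t : ℝ) (ht0 : 0 < t) (ht1 : t < 1) (m : ℕ) :
    arcAngle (Complex.exp ((Real.pi * (2 * (m : ℝ) - t) / (d : ℝ) : ℝ) * Complex.I))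
      (Complex.exp ((Real.pi * (2 * (m : ℝ)) / (d : ℝ) : ℝ) * Complex.I))
    = Real.pi * t / d := by
  have hπ := Real.pi_pos
  have hd0 : (0:ℝ) < d := by positivity
  have hdiv : Complex.exp ((Real.pi * (2 * (m : ℝ)) / (d : ℝ) : ℝ) * Complex.I) /
      Complex.exp ((Real.pi * (2 * (m : ℝ) - t) / (d : ℝ) : ℝ) * Complex.I)
      = Complex.exp (((Real.pi * t / d : ℝ) : ℂ) * I) := by
    rw [← Complex.exp_sub]
    congr 1
    push_cast
    field_simp
    ring
  have hpos : 0 < Real.pi * t / d := by positivity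
  have hle : Real.pi * t / d ≤ Real.pi := by
    have hd2 : (2:ℝ) ≤ d := by exact_mod_cast hd
    rw [div_le_iff₀ hd0]
    nlinarith
  have harg : (Complex.exp ((Real.pi * (2 * (m : ℝ)) / (d : ℝ) : ℝ) * Complex.I) /
      Complex.exp ((Real.pi * (2 * (m : ℝ) - t) / (d : ℝ) : ℝ) * Complex.I)).arg
      = Real.pi * t / d := by
    rw [hdiv]; exact argexpI _ (by linarith) hle
  rw [arcAngle, harg, if_neg (by linarith)]

set_option maxHeartbeats 1000000 in
/-- Let `d ≥ 2`, `b > 1`, `t ∈ (0,1)` and `λ = e^{iπt}`.  For `z ∈ S¹` one has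
`f_λ(z) ∈ Arc(1,λ)` iff `γ(z)` lies in one of the `d` arcs
`Arc(e^{iπ(2m−t)/d}, e^{iπ·2m/d})`, `m = 0,…,d−1`; and these arcs are pairwise
disjoint, so `f_λ^{−1}(Arc(1,λ)) ∩ S¹` is their disjoint union under `γ^{−1}`. -/
theorem stmt18 (d : ℕ) (hd : 2 ≤ d) (b : ℝ) (hb : 1 < b)
    (t : ℝ) (ht0 : 0 < t) (ht1 : t < 1) (lam : ℂ)
    (hlam : lam = Complex.exp ((Real.pi * t : ℝ) * Complex.I)) :
    (∀ z ∈ Metric.sphere (0 : ℂ) 1,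
      (fIsing d b lam z ∈ openArc 1 lam ↔
        ∃ m : ℕ, m < d ∧ gammaM b z ∈
          openArc (Complex.exp ((Real.pi * (2 * (m : ℝ) - t) / (d : ℝ) : ℝ) * Complex.I))
            (Complex.exp ((Real.pi * (2 * (m : ℝ)) / (d : ℝ) : ℝ) * Complex.I)))) ∧
    (∀ m₁ m₂ : ℕ, m₁ < d → m₂ < d → m₁ ≠ m₂ →
      Disjoint
        (openArc (Complex.exp ((Real.pi * (2 * (m₁ : ℝ) - t) / (d : ℝ) : ℝ) * Complex.I))
          (Complex.exp ((Real.pi * (2 * (m₁ : ℝ)) / (d : ℝ) : ℝ) * Complex.I)))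
        (openArc (Complex.exp ((Real.pi * (2 * (m₂ : ℝ) - t) / (d : ℝ) : ℝ) * Complex.I))
          (Complex.exp ((Real.pi * (2 * (m₂ : ℝ)) / (d : ℝ) : ℝ) * Complex.I)))) := by
  have hπ := Real.pi_pos
  have hd0 : (0:ℝ) < d := by positivity
  have hArc := arcAngle_arcs d hd t ht0 ht1
  have hpt : Real.pi * t < Real.pi := mul_lt_of_lt_one_right hπ ht1
  -- arcAngle 1 lam = π t
  have hlamArc : arcAngle 1 lam = Real.pi * t := by
    have harg : (lam / 1).arg = Real.pi * t := by
      rw [div_one, hlam]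
      exact argexpI _ (by nlinarith) (by nlinarith)
    rw [arcAngle, harg, if_neg (by nlinarith)]
  constructor
  · intro z hz
    have hz1 : ‖z‖ = 1 := by
      simpa using mem_sphere_zero_iff_norm.mp hz
    -- γ(z) is on the unit circle
    have hzb : z + (b:ℂ) ≠ 0 := by
      intro h
      have : z = -(b:ℂ) := by linear_combination h
      rw [this] at hz1
      simp [Complex.norm_real, abs_of_pos (by linarith : (0:ℝ) < b)] at hz1
      linarith
    have hnz : (Complex.normSq z : ℂ) = 1 := by
      have : Complex.normSq z = 1 := by
        rw [← Complex.sq_norm, hz1]; norm_num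
      rw [this]; norm_num
    have hkey : (b:ℂ) * z + 1 = z * (starRingEnd ℂ) (z + (b:ℂ)) := by
      rw [map_add, Complex.conj_ofReal, mul_add, Complex.mul_conj, hnz]; ring
    have habs : ‖gammaM b z‖ = 1 := by
      rw [gammaM, norm_div, hkey, norm_mul, Complex.norm_conj, hz1, one_mul,
        div_self (norm_ne_zero_iff.mpr hzb)]
    set θ := (gammaM b z).arg with hθ
    have hw : gammaM b z = Complex.exp ((θ:ℂ) * I) := by
      conv_lhs => rw [← Complex.norm_mul_exp_arg_mul_I (gammaM b z)]
      rw [habs]; simp [hθ]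
    have hfI : fIsing d b lam z = Complex.exp (((Real.pi * t + d * θ : ℝ) : ℂ) * I) := by
      rw [fIsing, hw, hlam, ← Complex.exp_nat_mul, ← Complex.exp_add]
      congr 1
      push_cast
      ring
    constructor
    · rintro ⟨s, hs0, hs1, hseq⟩
      rw [hlamArc] at hs1
      rw [one_mul, hfI, expI_eq_iff] at hseq
      obtain ⟨k, hk⟩ := hseq
      -- k = d*q + r
      set q : ℤ := k / (d:ℤ) with hq
      set r : ℤ := k % (d:ℤ) with hr
      have hr0 : 0 ≤ r := Int.emod_nonneg k (by positivity)
      have hrd : r < d := Int.emod_lt_of_pos k (by positivity)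
      have hqr : (d:ℤ) * q + r = k := Int.mul_ediv_add_emod k d
      refine ⟨r.toNat, ?_, s / d, by positivity, ?_, ?_⟩
      · omega
      · rw [hArc]
        rw [div_lt_div_iff₀ hd0 hd0]
        nlinarith
      · have hcast : (k:ℝ) = (d:ℝ) * (q:ℝ) + (r.toNat : ℝ) := by
          have hrn : ((r.toNat : ℤ)) = r := Int.toNat_of_nonneg hr0
          have h : k = (d:ℤ) * q + (r.toNat : ℤ) := by rw [hrn]; linarith [hqr]
          have h2 : ((k:ℤ):ℝ) = (((d:ℤ) * q + (r.toNat : ℤ) : ℤ) : ℝ) := by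
            exact_mod_cast congrArg (fun x : ℤ => (x:ℝ)) h
          push_cast at h2
          exact h2
        rw [hw, ← Complex.exp_add]
        rw [show ((Real.pi * (2 * (r.toNat : ℝ) - t) / (d : ℝ) : ℝ) : ℂ) * Complex.I +
            ((s / d : ℝ) : ℂ) * Complex.I =
            ((Real.pi * (2 * (r.toNat : ℝ) - t) / (d : ℝ) + s / d : ℝ) : ℂ) * Complex.I by
          push_cast; ring]
        rw [expI_eq_iff]
        refine ⟨q, ?_⟩
        have hd' : (d:ℝ) ≠ 0 := ne_of_gt hd0
        apply mul_left_cancel₀ hd'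
        have e1 : (d:ℝ) * (Real.pi * (2 * (r.toNat:ℝ) - t) / d) = Real.pi * (2 * (r.toNat:ℝ) - t) := by
          field_simp
        have e2 : (d:ℝ) * (s / d) = s := by field_simp
        rw [mul_add, mul_add, e1, e2]
        linear_combination hk + 2 * Real.pi * hcast
    · rintro ⟨m, hm, s, hs0, hs1, hseq⟩
      rw [hArc] at hs1
      rw [← Complex.exp_add,
        show ((Real.pi * (2 * (m : ℝ) - t) / (d : ℝ) : ℝ) : ℂ) * Complex.I +
          ((s : ℝ) : ℂ) * Complex.I =
          ((Real.pi * (2 * (m : ℝ) - t) / (d : ℝ) + s : ℝ) : ℂ) * Complex.I by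
        push_cast; ring] at hseq
      rw [hw, expI_eq_iff] at hseq
      obtain ⟨k, hk⟩ := hseq
      refine ⟨(d:ℝ) * s, by positivity, ?_, ?_⟩
      · rw [hlamArc]
        calc (d:ℝ) * s < (d:ℝ) * (Real.pi * t / d) := by
              exact mul_lt_mul_of_pos_left hs1 hd0
          _ = Real.pi * t := by field_simp
      · rw [one_mul, hfI, expI_eq_iff]
        refine ⟨(m : ℤ) + d * k, ?_⟩
        have hd' : (d:ℝ) ≠ 0 := ne_of_gt hd0
        have hk' : (d:ℝ) * θ = Real.pi * (2 * (m:ℝ) - t) + d * s + 2 * Real.pi * k * d := by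
          have h := hk
          field_simp at h
          linarith [h]
        push_cast
        linarith [hk']
  · intro m₁ m₂ hm₁ hm₂ hne
    rw [Set.disjoint_left]
    rintro z ⟨s₁, hs₁0, hs₁1, rfl⟩ ⟨s₂, hs₂0, hs₂1, heq⟩
    rw [hArc] at hs₁1 hs₂1
    rw [← Complex.exp_add, ← Complex.exp_add,
      show ((Real.pi * (2 * (m₁ : ℝ) - t) / (d : ℝ) : ℝ) : ℂ) * Complex.I +
        ((s₁ : ℝ) : ℂ) * Complex.I =
        ((Real.pi * (2 * (m₁ : ℝ) - t) / (d : ℝ) + s₁ : ℝ) : ℂ) * Complex.I by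
        push_cast; ring,
      show ((Real.pi * (2 * (m₂ : ℝ) - t) / (d : ℝ) : ℝ) : ℂ) * Complex.I +
        ((s₂ : ℝ) : ℂ) * Complex.I =
        ((Real.pi * (2 * (m₂ : ℝ) - t) / (d : ℝ) + s₂ : ℝ) : ℂ) * Complex.I by
        push_cast; ring, expI_eq_iff] at heq
    obtain ⟨k, hk⟩ := heq
    have hd' : (d:ℝ) ≠ 0 := ne_of_gt hd0
    set N : ℤ := (m₁ : ℤ) - m₂ - k * d with hN
    have hNr : 2 * Real.pi * (N:ℝ) = (d:ℝ) * s₂ - (d:ℝ) * s₁ := by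
      have hk' : Real.pi * (2 * (m₁:ℝ) - t) + d * s₁ =
          Real.pi * (2 * (m₂:ℝ) - t) + d * s₂ + 2 * Real.pi * k * d := by
        field_simp at hk
        linarith [hk]
      push_cast [hN]
      linarith [hk']
    have hds₁ : (d:ℝ) * s₁ < Real.pi := by
      have : (d:ℝ) * s₁ < (d:ℝ) * (Real.pi * t / d) := mul_lt_mul_of_pos_left hs₁1 hd0
      have h2 : (d:ℝ) * (Real.pi * t / d) = Real.pi * t := by field_simp
      linarith
    have hds₂ : (d:ℝ) * s₂ < Real.pi := by
      have : (d:ℝ) * s₂ < (d:ℝ) * (Real.pi * t / d) := mul_lt_mul_of_pos_left hs₂1 hd0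
      have h2 : (d:ℝ) * (Real.pi * t / d) = Real.pi * t := by field_simp
      linarith
    have hds₁0 : 0 < (d:ℝ) * s₁ := by positivity
    have hds₂0 : 0 < (d:ℝ) * s₂ := by positivity
    have hN0 : N = 0 := by
      have h1 : (N:ℝ) < 1 :=
        lt_of_mul_lt_mul_left
          (show (2 * Real.pi) * (N:ℝ) < (2 * Real.pi) * 1 by linarith) (by positivity)
      have h2 : (-1:ℝ) < N :=
        lt_of_mul_lt_mul_left
          (show (2 * Real.pi) * (-1:ℝ) < (2 * Real.pi) * (N:ℝ) by linarith) (by positivity)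
      have h1' : N < 1 := by exact_mod_cast h1
      have h2' : -1 < N := by exact_mod_cast h2
      omega
    have hkd : (m₁ : ℤ) - m₂ = k * d := by
      have h := hN0; rw [hN] at h; linarith
    have hm₁' : (m₁ : ℤ) < d := by exact_mod_cast hm₁
    have hm₂' : (m₂ : ℤ) < d := by exact_mod_cast hm₂
    have hdz : (0:ℤ) < d := by exact_mod_cast (by omega : 0 < d)
    rcases lt_trichotomy k 0 with h | h | h
    · have hk1 : k ≤ -1 := by omega
      have : k * d ≤ -1 * d := mul_le_mul_of_nonneg_right hk1 (le_of_lt hdz)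
      have hmm : (0:ℤ) ≤ (m₂ : ℤ) := by positivity
      linarith [hkd, this, hm₁', hmm]
    · have : (m₁ : ℤ) = m₂ := by rw [h, zero_mul] at hkd; omega
      exact hne (by exact_mod_cast this)
    · have hk1 : 1 ≤ k := by omega
      have : 1 * d ≤ k * d := mul_le_mul_of_nonneg_right hk1 (le_of_lt hdz)
      have hmm : (0:ℤ) ≤ (m₁ : ℤ) := by positivity
      linarith [hkd, this, hm₂', hmm]
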